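/- arXiv:1204.2135 — 4 statements merged into one kernel-verified Lean document; each statement's English description precedes it below -/
import Mathlib

section
/- Let μ be a finite nonnegative Borel measure on R^d satisfying the growth condition μ(B(x,t)) ≤ C₁ t^s for all balls, where s ∈ (d-1, d). Then there is a constant c₆ > 0 (depending only on s, d, C₁) such that for any ball B(x,t) with μ(B(x,t)) ≥ λ t^s (where 0 < λ ≤ 1), the contracted ball satisfies μ(B(x, t(1 - c₆ λ^{1/(s+1-d)}))) ≥ (λ/2) t^s. -/
open MeasureTheory Metric Set

set_option maxHeartbeats 1000000 in
/-- If a finite measure on `ℝ^d` satisfies the growth bound `μ(B(x,t)) ≤ C₁ t^s`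
with `d-1 < s < d`, then there is `c₆ > 0` (depending on `s`, `d`, `C₁`) such that
any ball with `μ(B(x,t)) ≥ λ t^s` (for `0 < λ ≤ 1`) keeps half of this mass after
contracting the radius by the factor `1 - c₆ λ^{1/(s+1-d)}`. -/
theorem contracted_ball_keeps_mass
    (d : ℕ) (hd : 2 ≤ d) (s : ℝ) (hs : s ∈ Set.Ioo ((d : ℝ) - 1) d)
    (μ : Measure (EuclideanSpace ℝ (Fin d))) [IsFiniteMeasure μ]
    (C₁ : ℝ) (hC₁ : 0 < C₁)
    (hgrowth : ∀ (x : EuclideanSpace ℝ (Fin d)) (t : ℝ), 0 < t →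
      μ (ball x t) ≤ ENNReal.ofReal (C₁ * t ^ s)) :
    ∃ c₆ : ℝ, 0 < c₆ ∧
      ∀ (x : EuclideanSpace ℝ (Fin d)) (t lam : ℝ), 0 < t → 0 < lam → lam ≤ 1 →
        ENNReal.ofReal (lam * t ^ s) ≤ μ (ball x t) →
        ENNReal.ofReal (lam / 2 * t ^ s) ≤
          μ (ball x (t * (1 - c₆ * lam ^ (1 / (s + 1 - d))))) := by
  obtain ⟨hs1, hs2⟩ := hs
  have hdR : (2 : ℝ) ≤ d := by exact_mod_cast hd
  set E := EuclideanSpace ℝ (Fin d) with hE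
  set ε : ℝ := s + 1 - (d : ℝ) with hεdef
  have hε : 0 < ε := by simp only [hεdef]; linarith
  set M : ℝ := 3 * (d : ℝ) * 2 ^ d * C₁ with hMdef
  have hM : 0 < M := by
    have : (0 : ℝ) < d := by linarith
    positivity
  set c₆ : ℝ := min (1/4) ((1/(2*M)) ^ (1/ε)) with hc₆def
  have hc₆pos : 0 < c₆ := lt_min (by norm_num) (Real.rpow_pos_of_pos (by positivity) _)
  refine ⟨c₆, hc₆pos, ?_⟩
  intro x t lam ht hlam hlam1 hmass
  set θ : ℝ := c₆ * lam ^ (1/ε) with hθdef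
  have hθ0 : 0 < θ := mul_pos hc₆pos (Real.rpow_pos_of_pos hlam _)
  have hθ14 : θ ≤ 1/4 := by
    have h1 : lam ^ (1/ε) ≤ 1 := Real.rpow_le_one hlam.le hlam1 (by positivity)
    calc θ ≤ c₆ * 1 := by
            exact mul_le_mul_of_nonneg_left h1 hc₆pos.le
      _ = c₆ := mul_one c₆
      _ ≤ 1/4 := min_le_left _ _
  set r : ℝ := θ * t with hrdef
  have hr0 : 0 < r := mul_pos hθ0 ht
  set A : Set E := ball x t \ ball x (t * (1 - θ)) with hAdef
  have hAm : MeasurableSet A := measurableSet_ball.diff measurableSet_ball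
  set R₁ : ℝ := (1 - 2*θ) * t with hR₁def
  set R₂ : ℝ := (1 + θ) * t with hR₂def
  have hR₁0 : 0 ≤ R₁ := by
    have : (0:ℝ) ≤ 1 - 2*θ := by linarith
    positivity
  have hR₁₂ : R₁ < R₂ := by
    have : (1 - 2*θ) < 1 + θ := by linarith
    exact mul_lt_mul_of_pos_right this ht
  set A' : Set E := ball x R₂ \ closedBall x R₁ with hA'def
  -- for y in the annulus A, the ball of radius r around y is inside the enlarged annulus A'
  have hsub : ∀ y ∈ A, ball y r ⊆ A' := by
    rintro y ⟨hy1, hy2⟩ z hz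
    rw [mem_ball] at hz hy1
    have hyx : t * (1 - θ) ≤ dist y x := by
      by_contra h
      exact hy2 (mem_ball.2 (by linarith))
    constructor
    · rw [mem_ball]
      calc dist z x ≤ dist z y + dist y x := dist_triangle z y x
        _ < r + t := by linarith
        _ = R₂ := by rw [hrdef, hR₂def]; ring
    · intro hz'
      rw [mem_closedBall] at hz'
      have : dist y x ≤ dist y z + dist z x := dist_triangle y z x
      rw [dist_comm y z] at this
      have : dist y x < r + R₁ := by linarith
      rw [hrdef, hR₁def] at this
      nlinarith
  -- Tonelli argument
  set S : Set (E × E) := {p : E × E | p.1 ∈ A ∧ dist p.1 p.2 < r} with hSdef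
  have hSm : MeasurableSet S := by
    have h1 : MeasurableSet {p : E × E | p.1 ∈ A} := measurable_fst hAm
    have h2 : MeasurableSet {p : E × E | dist p.1 p.2 < r} :=
      measurableSet_lt (by fun_prop) measurable_const
    exact h1.inter h2
  set v : ENNReal := volume (ball (0 : E) 1) with hvdef
  have hv0 : v ≠ 0 := (measure_ball_pos volume 0 one_pos).ne'
  have hvtop : v ≠ ⊤ := measure_ball_lt_top.ne
  have hfin : Module.finrank ℝ E = d := finrank_euclideanSpace_fin
  have hprod1 : (μ.prod volume) S = μ A * (ENNReal.ofReal (r ^ d) * v) := by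
    rw [Measure.prod_apply hSm]
    have : ∀ y : E, volume (Prod.mk y ⁻¹' S) =
        A.indicator (fun _ => ENNReal.ofReal (r ^ d) * v) y := by
      intro y
      by_cases hy : y ∈ A
      · have : Prod.mk y ⁻¹' S = ball y r := by
          ext z
          simp only [hSdef, mem_preimage, mem_setOf_eq, hy, true_and, mem_ball, dist_comm z y]
        rw [this, indicator_of_mem hy, Measure.addHaar_ball_of_pos volume y hr0, hfin, hvdef]
      · have : Prod.mk y ⁻¹' S = ∅ := by
          ext z; simp [hSdef, hy]
        rw [this, indicator_of_notMem hy, measure_empty]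
    rw [lintegral_congr this, lintegral_indicator hAm, setLIntegral_const, mul_comm]
  have hprod2 : (μ.prod volume) S = ∫⁻ z, μ (A ∩ ball z r) ∂volume := by
    rw [Measure.prod_apply_symm hSm]
    apply lintegral_congr
    intro z
    have hset : ((fun x => (x, z)) ⁻¹' S) = A ∩ ball z r := by
      ext y
      simp [hSdef, mem_ball]
    rw [hset]
  have hint : ∫⁻ z, μ (A ∩ ball z r) ∂volume ≤
      ENNReal.ofReal (C₁ * r ^ s) * volume A' := by
    have hptwise : ∀ z : E, μ (A ∩ ball z r) ≤
        A'.indicator (fun _ => ENNReal.ofReal (C₁ * r ^ s)) z := by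
      intro z
      by_cases hz : z ∈ A'
      · rw [indicator_of_mem hz]
        exact le_trans (measure_mono inter_subset_right) (hgrowth z r hr0)
      · rw [indicator_of_notMem hz]
        have : A ∩ ball z r = ∅ := by
          ext y
          simp only [mem_inter_iff, mem_empty_iff_false, iff_false, not_and]
          intro hy hyz
          exact hz (hsub y hy (by rwa [mem_ball, dist_comm]))
        simp [this]
    calc ∫⁻ z, μ (A ∩ ball z r) ∂volume
        ≤ ∫⁻ z, A'.indicator (fun _ => ENNReal.ofReal (C₁ * r ^ s)) z ∂volume :=
          lintegral_mono hptwise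
      _ = ENNReal.ofReal (C₁ * r ^ s) * volume A' := by
          rw [lintegral_indicator (measurableSet_ball.diff measurableSet_closedBall),
            setLIntegral_const]
  have hvolA' : volume A' ≤ ENNReal.ofReal (R₂ ^ d - R₁ ^ d) * v := by
    rw [hA'def, measure_diff (closedBall_subset_ball hR₁₂)
      measurableSet_closedBall.nullMeasurableSet measure_closedBall_lt_top.ne]
    rw [Measure.addHaar_ball_of_pos volume x (hR₁0.trans_lt hR₁₂), hfin,
      Measure.addHaar_closedBall volume x hR₁0, hfin]
    rw [tsub_le_iff_right, ← add_mul, ← ENNReal.ofReal_add (by nlinarith [pow_le_pow_left₀ hR₁0 hR₁₂.le d]) (by positivity)]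
    rw [sub_add_cancel]
  -- combine
  have hkey : μ A * ENNReal.ofReal (r ^ d) ≤ ENNReal.ofReal ((R₂ ^ d - R₁ ^ d) * (C₁ * r ^ s)) := by
    have h1 : μ A * (ENNReal.ofReal (r ^ d) * v) ≤
        ENNReal.ofReal ((R₂ ^ d - R₁ ^ d) * (C₁ * r ^ s)) * v := by
      calc μ A * (ENNReal.ofReal (r ^ d) * v) = (μ.prod volume) S := hprod1.symm
        _ = ∫⁻ z, μ (A ∩ ball z r) ∂volume := hprod2
        _ ≤ ENNReal.ofReal (C₁ * r ^ s) * volume A' := hint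
        _ ≤ ENNReal.ofReal (C₁ * r ^ s) * (ENNReal.ofReal (R₂ ^ d - R₁ ^ d) * v) :=
            mul_le_mul_right hvolA' _
        _ = ENNReal.ofReal ((R₂ ^ d - R₁ ^ d) * (C₁ * r ^ s)) * v := by
            rw [← mul_assoc, ← ENNReal.ofReal_mul (by positivity), mul_comm (C₁ * r ^ s)]
    rw [← mul_assoc] at h1
    exact (ENNReal.mul_le_mul_iff_left hv0 hvtop).1 h1
  have hμA : μ A ≤ ENNReal.ofReal ((R₂ ^ d - R₁ ^ d) * (C₁ * r ^ s) / r ^ d) := by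
    rw [ENNReal.ofReal_div_of_pos (by positivity)]
    rw [ENNReal.le_div_iff_mul_le (Or.inl (ENNReal.ofReal_pos.2 (by positivity)).ne')
      (Or.inl ENNReal.ofReal_ne_top)]
    exact hkey
  -- the real-number estimate
  have hD : (1 + θ) ^ d - (1 - 2*θ) ^ d ≤ 3 * θ * ((d : ℝ) * 2 ^ d) := by
    have hgs := geom_sum₂_mul (1 + θ) (1 - 2*θ) d
    have hsum : (∑ i ∈ Finset.range d, (1 + θ) ^ i * (1 - 2*θ) ^ (d - 1 - i)) ≤ (d : ℝ) * 2 ^ d := by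
      calc (∑ i ∈ Finset.range d, (1 + θ) ^ i * (1 - 2*θ) ^ (d - 1 - i))
          ≤ ∑ i ∈ Finset.range d, (2 : ℝ) ^ d := by
            apply Finset.sum_le_sum
            intro i hi
            have h1 : (1 + θ) ^ i ≤ (2:ℝ) ^ i := pow_le_pow_left₀ (by linarith) (by linarith) i
            have h2 : (2:ℝ) ^ i ≤ 2 ^ d :=
              pow_le_pow_right₀ (by norm_num) (Finset.mem_range.1 hi).le
            have h3 : (1 - 2*θ) ^ (d - 1 - i) ≤ 1 :=
              pow_le_one₀ (by linarith) (by linarith)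
            have h4 : (0:ℝ) ≤ (1 + θ) ^ i := by positivity
            nlinarith
      _ = (d : ℝ) * 2 ^ d := by
            rw [Finset.sum_const, Finset.card_range, nsmul_eq_mul]
    have h3θ : (1 + θ) - (1 - 2*θ) = 3 * θ := by ring
    rw [← hgs, h3θ]
    have : (0:ℝ) ≤ 3 * θ := by linarith
    calc (∑ i ∈ Finset.range d, (1 + θ) ^ i * (1 - 2*θ) ^ (d - 1 - i)) * (3 * θ)
        ≤ ((d : ℝ) * 2 ^ d) * (3 * θ) := mul_le_mul_of_nonneg_right hsum this
      _ = 3 * θ * ((d : ℝ) * 2 ^ d) := by ring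
  have hθε : θ ^ ε = c₆ ^ ε * lam := by
    rw [hθdef, Real.mul_rpow hc₆pos.le (Real.rpow_pos_of_pos hlam _).le]
    congr 1
    rw [← Real.rpow_mul hlam.le, one_div, inv_mul_cancel₀ hε.ne', Real.rpow_one]
  have hc₆ε : c₆ ^ ε ≤ 1 / (2 * M) := by
    have h1 : c₆ ^ ε ≤ ((1/(2*M)) ^ (1/ε)) ^ ε :=
      Real.rpow_le_rpow hc₆pos.le (min_le_right _ _) hε.le
    have h2 : ((1/(2*M) : ℝ) ^ (1/ε)) ^ ε = 1/(2*M) := by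
      rw [← Real.rpow_mul (by positivity), one_div ε, inv_mul_cancel₀ hε.ne', Real.rpow_one]
    linarith
  have hMθε : M * θ ^ ε ≤ lam / 2 := by
    rw [hθε]
    calc M * (c₆ ^ ε * lam) = (M * c₆ ^ ε) * lam := by ring
      _ ≤ (M * (1/(2*M))) * lam := by
          apply mul_le_mul_of_nonneg_right _ hlam.le
          exact mul_le_mul_of_nonneg_left hc₆ε hM.le
      _ = lam / 2 := by field_simp
  -- θ * θ^s = θ^ε * θ^d
  have hθpow : θ * θ ^ s = θ ^ ε * θ ^ (d : ℕ) := by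
    have h1 : θ ^ ε * θ ^ (d:ℕ) = θ ^ (ε + (d:ℝ)) := by
      rw [← Real.rpow_natCast θ d, ← Real.rpow_add hθ0]
    have h2 : ε + (d:ℝ) = 1 + s := by rw [hεdef]; ring
    rw [h1, h2, Real.rpow_add hθ0, Real.rpow_one]
  have hscalar : C₁ * ((1 + θ) ^ d - (1 - 2*θ) ^ d) * θ ^ s ≤ lam / 2 * θ ^ d := by
    have h1 : C₁ * ((1 + θ) ^ d - (1 - 2*θ) ^ d) * θ ^ s ≤ C₁ * (3 * θ * ((d:ℝ) * 2 ^ d)) * θ ^ s := by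
      apply mul_le_mul_of_nonneg_right _ (Real.rpow_pos_of_pos hθ0 s).le
      exact mul_le_mul_of_nonneg_left hD hC₁.le
    have h2 : C₁ * (3 * θ * ((d:ℝ) * 2 ^ d)) * θ ^ s = M * (θ * θ ^ s) := by
      rw [hMdef]; ring
    have h3 : M * (θ * θ ^ s) = (M * θ ^ ε) * θ ^ (d:ℕ) := by
      rw [hθpow]; ring
    have h4 : (M * θ ^ ε) * θ ^ (d:ℕ) ≤ (lam / 2) * θ ^ (d:ℕ) :=
      mul_le_mul_of_nonneg_right hMθε (by positivity)
    calc C₁ * ((1 + θ) ^ d - (1 - 2*θ) ^ d) * θ ^ s ≤ C₁ * (3 * θ * ((d:ℝ) * 2 ^ d)) * θ ^ s := h1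
      _ = M * (θ * θ ^ s) := h2
      _ = (M * θ ^ ε) * θ ^ (d:ℕ) := h3
      _ ≤ lam / 2 * θ ^ d := h4
  have hreal : (R₂ ^ d - R₁ ^ d) * (C₁ * r ^ s) / r ^ d ≤ lam / 2 * t ^ s := by
    rw [div_le_iff₀ (by positivity)]
    have hrs : r ^ s = θ ^ s * t ^ s := Real.mul_rpow hθ0.le ht.le
    have hR2 : R₂ ^ d = (1 + θ) ^ d * t ^ d := mul_pow _ _ _
    have hR1 : R₁ ^ d = (1 - 2*θ) ^ d * t ^ d := mul_pow _ _ _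
    have hrd : r ^ (d:ℕ) = θ ^ (d:ℕ) * t ^ (d:ℕ) := mul_pow _ _ _
    rw [hrs, hR2, hR1, hrd]
    have hmul := mul_le_mul_of_nonneg_right hscalar
      (show (0:ℝ) ≤ t ^ (d:ℕ) * t ^ s by positivity)
    calc ((1 + θ) ^ d * t ^ d - (1 - 2*θ) ^ d * t ^ d) * (C₁ * (θ ^ s * t ^ s))
        = (C₁ * ((1 + θ) ^ d - (1 - 2*θ) ^ d) * θ ^ s) * (t ^ (d:ℕ) * t ^ s) := by ring
      _ ≤ (lam / 2 * θ ^ d) * (t ^ (d:ℕ) * t ^ s) := hmul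
      _ = lam / 2 * t ^ s * (θ ^ (d:ℕ) * t ^ (d:ℕ)) := by ring
  have hAle : μ A ≤ ENNReal.ofReal (lam / 2 * t ^ s) :=
    hμA.trans (ENNReal.ofReal_le_ofReal hreal)
  -- final assembly
  have hcover : ball x t ⊆ ball x (t * (1 - θ)) ∪ A := by
    rw [hAdef, union_diff_self]
    exact subset_union_right
  have hle : μ (ball x t) ≤ μ (ball x (t * (1 - θ))) + μ A :=
    (measure_mono hcover).trans (measure_union_le _ _)
  have h5 : ENNReal.ofReal (lam * t ^ s) ≤ μ (ball x (t * (1 - θ))) + ENNReal.ofReal (lam / 2 * t ^ s) :=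
    hmass.trans (hle.trans (add_le_add_right hAle _))
  have hsplit : ENNReal.ofReal (lam * t ^ s) =
      ENNReal.ofReal (lam / 2 * t ^ s) + ENNReal.ofReal (lam / 2 * t ^ s) := by
    rw [← ENNReal.ofReal_add (by positivity) (by positivity)]
    congr 1
    ring
  rw [hsplit] at h5
  exact (ENNReal.add_le_add_iff_right ENNReal.ofReal_ne_top).1 h5
end

section
/- Let Φ : [0,∞) → [0,∞) satisfy Φ(0)=0, Φ continuous and strictly increasing, and suppose there exist σ, ϰ > 0 such that t ↦ Φ(t)/t^σ is nondecreasing on (0, ϰ]. Define the Wolff potential W_{Φ,s}(μ)(x) = ∫₀^∞ Φ(μ(B(x,r))/r^s) dr/r and, for A > 0, cap_{Φ,s}^{(A)}(E) = sup{ μ(E) : supp(μ) ⊂ E, W_{Φ,s}(μ)(x) ≤ A for all x }. Then for any 0 < A' < A there is a constant C = C(A', A, σ, ϰ, s) > 0 such that for all compact E ⊂ R^d: cap_{Φ,s}^{(A')}(E) ≤ cap_{Φ,s}^{(A)}(E) ≤ C · cap_{Φ,s}^{(A')}(E). -/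
open MeasureTheory Metric Set
open scoped ENNReal

/-- The `s`-dimensional Wolff potential of `μ` with gauge `Φ`. -/
noncomputable def wolffPotential (d : ℕ) (s : ℝ) (Φ : ℝ → ℝ)
    (μ : Measure (EuclideanSpace ℝ (Fin d))) (x : EuclideanSpace ℝ (Fin d)) : ℝ≥0∞ :=
  ∫⁻ r in Set.Ioi (0 : ℝ), ENNReal.ofReal (Φ ((μ (ball x r)).toReal / r ^ s) / r)

/-- The nonlinear capacity at level `A` associated to the gauge `Φ`. -/
noncomputable def capPhi (d : ℕ) (s : ℝ) (Φ : ℝ → ℝ) (A : ℝ)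
    (E : Set (EuclideanSpace ℝ (Fin d))) : ℝ≥0∞ :=
  sSup {m : ℝ≥0∞ | ∃ μ : Measure (EuclideanSpace ℝ (Fin d)), IsFiniteMeasure μ ∧
    μ Eᶜ = 0 ∧ (∀ x, wolffPotential d s Φ μ x ≤ ENNReal.ofReal A) ∧ m = μ E}

/-- Key estimate: if the Wolff potential of `μ` is bounded by `A` everywhere, then
`Φ(μ(B(x,r))/(Mr)^s) * log M ≤ A` for every `M > 1`. -/
lemma phi_log_bound {d : ℕ} {s : ℝ} (hs : 0 < s) {Φ : ℝ → ℝ}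
    (hmono : MonotoneOn Φ (Set.Ici (0 : ℝ))) (hΦ0 : Φ 0 = 0)
    {μ : Measure (EuclideanSpace ℝ (Fin d))} [IsFiniteMeasure μ]
    {A : ℝ} (hA : 0 < A)
    (hW : ∀ x, wolffPotential d s Φ μ x ≤ ENNReal.ofReal A)
    {M : ℝ} (hM : 1 < M) (x : EuclideanSpace ℝ (Fin d)) {r : ℝ} (hr : 0 < r) :
    Φ ((μ (ball x r)).toReal / (M * r) ^ s) * Real.log M ≤ A := by
  have hM0 : 0 < M := lt_trans one_pos hM
  have hMr : 0 < M * r := mul_pos hM0 hr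
  set u : ℝ := (μ (ball x r)).toReal / (M * r) ^ s with hu
  have hu0 : 0 ≤ u := div_nonneg ENNReal.toReal_nonneg (Real.rpow_nonneg hMr.le s)
  have hΦu0 : 0 ≤ Φ u := by
    rw [← hΦ0]; exact hmono (le_refl (0 : ℝ)) hu0 hu0
  -- the integral of `t⁻¹` over `Ioc r (M*r)`
  have hint : ∫ t in Set.Ioc r (M * r), t⁻¹ = Real.log M := by
    have h1 : ∫ t in r..(M * r), t⁻¹ = Real.log ((M * r) / r) :=
      integral_inv_of_pos hr hMr
    rw [intervalIntegral.integral_of_le (by nlinarith : r ≤ M * r)] at h1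
    rw [h1, mul_div_assoc, div_self hr.ne', mul_one]
  have hIntOn : IntegrableOn (fun t : ℝ => t⁻¹) (Set.Ioc r (M * r)) := by
    apply (ContinuousOn.integrableOn_Icc ?_).mono_set Set.Ioc_subset_Icc_self
    exact ContinuousOn.inv₀ continuousOn_id fun t ht => by
      rcases ht with ⟨h1, _⟩; exact (lt_of_lt_of_le hr h1).ne'
  have hlin : (∫⁻ t in Set.Ioc r (M * r), ENNReal.ofReal t⁻¹) =
      ENNReal.ofReal (Real.log M) := by
    rw [← hint, ← ofReal_integral_eq_lintegral_ofReal hIntOn]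
    exact (ae_restrict_mem measurableSet_Ioc).mono fun t ht =>
      inv_nonneg.mpr (le_of_lt (lt_trans hr ht.1))
  -- compare with the Wolff potential
  have key : ENNReal.ofReal (Φ u * Real.log M) ≤ ENNReal.ofReal A := by
    calc ENNReal.ofReal (Φ u * Real.log M)
        = ∫⁻ t in Set.Ioc r (M * r), ENNReal.ofReal (Φ u) * ENNReal.ofReal t⁻¹ := by
          rw [lintegral_const_mul' _ _ ENNReal.ofReal_ne_top, hlin,
            ← ENNReal.ofReal_mul hΦu0]
      _ ≤ ∫⁻ t in Set.Ioc r (M * r),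
            ENNReal.ofReal (Φ ((μ (ball x t)).toReal / t ^ s) / t) := by
          apply lintegral_mono_ae
          refine (ae_restrict_mem measurableSet_Ioc).mono fun t ht => ?_
          have ht0 : 0 < t := lt_trans hr ht.1
          rw [← ENNReal.ofReal_mul hΦu0]
          apply ENNReal.ofReal_le_ofReal
          rw [div_eq_mul_inv]
          apply mul_le_mul_of_nonneg_right _ (inv_nonneg.mpr ht0.le)
          have hvt0 : 0 ≤ (μ (ball x t)).toReal / t ^ s :=
            div_nonneg ENNReal.toReal_nonneg (Real.rpow_nonneg ht0.le s)
          apply hmono hu0 hvt0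
          have hnum : (μ (ball x r)).toReal ≤ (μ (ball x t)).toReal :=
            ENNReal.toReal_mono (measure_ne_top μ _)
              (measure_mono (ball_subset_ball ht.1.le))
          have hden : t ^ s ≤ (M * r) ^ s :=
            Real.rpow_le_rpow ht0.le ht.2 hs.le
          calc u ≤ (μ (ball x t)).toReal / (M * r) ^ s := by
                rw [hu]; gcongr
            _ ≤ (μ (ball x t)).toReal / t ^ s :=
                div_le_div_of_nonneg_left ENNReal.toReal_nonneg
                  (Real.rpow_pos_of_pos ht0 s) hden
      _ ≤ wolffPotential d s Φ μ x := by
          apply lintegral_mono_set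
          exact fun t ht => lt_trans hr ht.1
      _ ≤ ENNReal.ofReal A := hW x
  exact (ENNReal.ofReal_le_ofReal_iff hA.le).mp key

/-- Comparison of nonlinear capacities at different levels: for `0 < A' < A`,
`cap^{(A')} ≤ cap^{(A)} ≤ C cap^{(A')}` with `C = C(A',A,σ,ϰ,s)`. -/
theorem capacity_level_comparison
    (d : ℕ) (hd : 2 ≤ d) (s : ℝ) (hs : 0 < s)
    (Φ : ℝ → ℝ) (hΦ0 : Φ 0 = 0) (hΦcont : Continuous Φ)
    (hΦmono : StrictMonoOn Φ (Set.Ici (0 : ℝ)))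
    (σ ϰ : ℝ) (hσ : 0 < σ) (hϰ : 0 < ϰ)
    (hΦhom : MonotoneOn (fun t => Φ t / t ^ σ) (Set.Ioc (0 : ℝ) ϰ))
    (A' A : ℝ) (hA' : 0 < A') (hAA : A' < A) :
    ∃ C : ℝ, 0 < C ∧ ∀ E : Set (EuclideanSpace ℝ (Fin d)), IsCompact E →
      capPhi d s Φ A' E ≤ capPhi d s Φ A E ∧
      capPhi d s Φ A E ≤ ENNReal.ofReal C * capPhi d s Φ A' E := by
  have hA : 0 < A := hA'.trans hAA
  have hmono : MonotoneOn Φ (Set.Ici (0 : ℝ)) := hΦmono.monotoneOn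
  have hΦϰ : 0 < Φ ϰ := by
    rw [← hΦ0]; exact hΦmono (le_refl (0 : ℝ)) hϰ.le hϰ
  set β : ℝ := min ϰ (Φ ϰ) with hβdef
  have hβ : 0 < β := lt_min hϰ hΦϰ
  set M : ℝ := Real.exp (A / β) with hMdef
  have hM : 1 < M := Real.one_lt_exp_iff.mpr (div_pos hA hβ)
  have hM0 : 0 < M := lt_trans one_pos hM
  have hlogM : Real.log M = A / β := Real.log_exp _
  set lam : ℝ := (A' / A) ^ σ⁻¹ with hlamdef
  have hlam0 : 0 < lam := Real.rpow_pos_of_pos (div_pos hA' hA) _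
  have hlam1 : lam ≤ 1 := by
    apply Real.rpow_le_one (div_nonneg hA'.le hA.le) _ (inv_nonneg.mpr hσ.le)
    exact (div_le_one hA).mpr hAA.le
  have hlamσ : lam ^ σ = A' / A := by
    rw [hlamdef, ← Real.rpow_mul (by positivity), inv_mul_cancel₀ hσ.ne', Real.rpow_one]
  set c : ℝ := lam * M ^ (-s) with hcdef
  have hc : 0 < c := mul_pos hlam0 (Real.rpow_pos_of_pos hM0 _)
  refine ⟨c⁻¹, inv_pos.mpr hc, fun E _ => ⟨?_, ?_⟩⟩
  · -- monotonicity in the level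
    apply sSup_le_sSup
    rintro m ⟨μ, h1, h2, h3, h4⟩
    exact ⟨μ, h1, h2, fun x => (h3 x).trans (ENNReal.ofReal_le_ofReal hAA.le), h4⟩
  · -- the quantitative bound
    rw [capPhi]
    apply sSup_le
    rintro m ⟨μ, hfin, hEc, hW, rfl⟩
    haveI := hfin
    set ν : Measure (EuclideanSpace ℝ (Fin d)) := (ENNReal.ofReal c) • μ with hνdef
    haveI hνfin : IsFiniteMeasure ν := by
      constructor
      rw [hνdef, Measure.smul_apply, smul_eq_mul]
      exact ENNReal.mul_lt_top ENNReal.ofReal_lt_top (measure_lt_top μ _)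
    have hνball : ∀ (x : EuclideanSpace ℝ (Fin d)) (t : ℝ),
        (ν (ball x t)).toReal = c * (μ (ball x t)).toReal := by
      intro x t
      rw [hνdef, Measure.smul_apply, smul_eq_mul, ENNReal.toReal_mul,
        ENNReal.toReal_ofReal hc.le]
    -- key: the small-argument bound
    have hsmall : ∀ (x : EuclideanSpace ℝ (Fin d)) {t : ℝ}, 0 < t →
        (μ (ball x t)).toReal / (M * t) ^ s ≤ ϰ := by
      intro x t ht
      have h1 := phi_log_bound hs hmono hΦ0 hA hW hM x ht
      rw [hlogM] at h1
      set u : ℝ := (μ (ball x t)).toReal / (M * t) ^ s with hu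
      have hu0 : 0 ≤ u :=
        div_nonneg ENNReal.toReal_nonneg (Real.rpow_nonneg (by positivity) s)
      have h2 : Φ u ≤ β := by
        have hAβ : 0 < A / β := div_pos hA hβ
        have h2a : Φ u ≤ A / (A / β) := (le_div_iff₀ hAβ).mpr h1
        have h2b : A / (A / β) = β := by field_simp
        linarith
      have h3 : Φ u ≤ Φ ϰ := h2.trans (min_le_right _ _)
      by_contra hcon
      push_neg at hcon
      exact absurd (hΦmono hϰ.le (hϰ.le.trans hcon.le) hcon) (not_lt.mpr h3)
    -- admissibility of ν at level A'
    have hνW : ∀ x, wolffPotential d s Φ ν x ≤ ENNReal.ofReal A' := by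
      intro x
      have hpt : ∀ t ∈ Set.Ioi (0 : ℝ),
          ENNReal.ofReal (Φ ((ν (ball x t)).toReal / t ^ s) / t) ≤
          ENNReal.ofReal (A' / A) *
            ENNReal.ofReal (Φ ((μ (ball x t)).toReal / t ^ s) / t) := by
        intro t ht
        have ht0 : (0 : ℝ) < t := ht
        have hts : 0 < t ^ s := Real.rpow_pos_of_pos ht0 s
        set v : ℝ := (μ (ball x t)).toReal / t ^ s with hv
        have hv0 : 0 ≤ v := div_nonneg ENNReal.toReal_nonneg hts.le
        have hΦv0 : 0 ≤ Φ v := by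
          rw [← hΦ0]; exact hmono (le_refl (0 : ℝ)) hv0 hv0
        have harg : (ν (ball x t)).toReal / t ^ s = lam * (v / M ^ s) := by
          rw [hνball, hcdef, hv, Real.rpow_neg hM0.le]
          ring
        set u : ℝ := v / M ^ s with hu'
        have huu : u = (μ (ball x t)).toReal / (M * t) ^ s := by
          rw [hu', hv, Real.mul_rpow hM0.le ht0.le, div_div]
          ring
        have huϰ : u ≤ ϰ := by rw [huu]; exact hsmall x ht0
        have hu0 : 0 ≤ u := div_nonneg hv0 (Real.rpow_pos_of_pos hM0 s).le
        have hkey : Φ (lam * u) ≤ (A' / A) * Φ v := by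
          rcases eq_or_lt_of_le hu0 with h0 | h0
          · rw [← h0, mul_zero, hΦ0]
            positivity
          · have hmem1 : lam * u ∈ Set.Ioc (0 : ℝ) ϰ :=
              ⟨mul_pos hlam0 h0, le_trans (by nlinarith) huϰ⟩
            have hmem2 : u ∈ Set.Ioc (0 : ℝ) ϰ := ⟨h0, huϰ⟩
            have hh := hΦhom hmem1 hmem2 (by nlinarith)
            simp only at hh
            have hΦu0 : 0 ≤ Φ u := by
              rw [← hΦ0]; exact hmono (le_refl (0 : ℝ)) hu0 hu0
            have hlu : (lam * u) ^ σ = lam ^ σ * u ^ σ :=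
              Real.mul_rpow hlam0.le hu0
            have huσ : 0 < u ^ σ := Real.rpow_pos_of_pos h0 σ
            have hluσ : 0 < (lam * u) ^ σ :=
              Real.rpow_pos_of_pos (mul_pos hlam0 h0) σ
            have h5 : Φ (lam * u) ≤ (lam * u) ^ σ / u ^ σ * Φ u := by
              rw [div_le_div_iff₀ hluσ huσ] at hh
              rw [div_mul_eq_mul_div, le_div_iff₀ huσ]
              linarith [hh]
            have h6 : (lam * u) ^ σ / u ^ σ = A' / A := by
              rw [hlu, hlamσ, mul_div_assoc, div_self huσ.ne', mul_one]
            have h7 : Φ u ≤ Φ v := by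
              apply hmono hu0 hv0
              rw [hu']
              have h1M : (1:ℝ) ≤ M ^ s := Real.one_le_rpow hM.le hs.le
              exact div_le_self hv0 h1M
            calc Φ (lam * u) ≤ (lam * u) ^ σ / u ^ σ * Φ u := h5
              _ = (A' / A) * Φ u := by rw [h6]
              _ ≤ (A' / A) * Φ v := by
                  apply mul_le_mul_of_nonneg_left h7 (by positivity)
        rw [harg]
        calc ENNReal.ofReal (Φ (lam * u) / t)
            ≤ ENNReal.ofReal ((A' / A) * Φ v / t) := by
              apply ENNReal.ofReal_le_ofReal
              gcongr
          _ = ENNReal.ofReal (A' / A) * ENNReal.ofReal (Φ v / t) := by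
              rw [mul_div_assoc, ENNReal.ofReal_mul (by positivity)]
      calc wolffPotential d s Φ ν x
          ≤ ∫⁻ t in Set.Ioi (0:ℝ), ENNReal.ofReal (A' / A) *
              ENNReal.ofReal (Φ ((μ (ball x t)).toReal / t ^ s) / t) := by
            apply lintegral_mono_ae
            exact (ae_restrict_mem measurableSet_Ioi).mono hpt
        _ = ENNReal.ofReal (A' / A) * wolffPotential d s Φ μ x := by
            rw [lintegral_const_mul' _ _ ENNReal.ofReal_ne_top]; rfl
        _ ≤ ENNReal.ofReal (A' / A) * ENNReal.ofReal A :=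
            mul_le_mul_right (hW x) _
        _ = ENNReal.ofReal A' := by
            rw [← ENNReal.ofReal_mul (by positivity), div_mul_cancel₀ _ hA.ne']
    have hmem : ν E ∈ {m : ℝ≥0∞ | ∃ μ : Measure (EuclideanSpace ℝ (Fin d)),
        IsFiniteMeasure μ ∧ μ Eᶜ = 0 ∧
        (∀ x, wolffPotential d s Φ μ x ≤ ENNReal.ofReal A') ∧ m = μ E} :=
      ⟨ν, hνfin, by rw [hνdef, Measure.smul_apply, smul_eq_mul, hEc, mul_zero], hνW, rfl⟩
    have hle : ν E ≤ capPhi d s Φ A' E := le_sSup hmem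
    have heq : μ E = ENNReal.ofReal c⁻¹ * ν E := by
      rw [hνdef, Measure.smul_apply, smul_eq_mul, ← mul_assoc,
        ← ENNReal.ofReal_mul (by positivity), inv_mul_cancel₀ hc.ne', ENNReal.ofReal_one,
        one_mul]
    rw [heq]
    exact mul_le_mul_right hle _
end

section
/- Oscillation lemma for the Riesz transform: let ν be a finite signed (vector-valued allowed) Borel measure on R^d, let Ω ⊂ B = B(z,ρ) with dist(Ω, supp(ν)) ≥ ερ, and define R(ν)(x) = ∫ (y−x)/|y−x|^{1+s} dν(y). Then for M ≥ 6, osc_Ω R(ν) := sup{|R(ν)(x) − R(ν)(x')| : x, x' ∈ Ω} ≤ (2/(ερ)^s) |ν|(B(z, Mρ/3)) + (C/M) sup_{r>0} |ν|(B(z,r))/r^s, where C depends only on s and d. -/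
open MeasureTheory Metric Set
open scoped ENNReal

/-- The fractional Riesz kernel `K(w) = w / |w|^{1+s}`. -/
noncomputable def rieszKernel (d : ℕ) (s : ℝ) (w : EuclideanSpace ℝ (Fin d)) :
    EuclideanSpace ℝ (Fin d) :=
  (‖w‖ ^ (1 + s))⁻¹ • w

/-- The support of a measure. -/
def measSupport (d : ℕ) (μ : Measure (EuclideanSpace ℝ (Fin d))) :
    Set (EuclideanSpace ℝ (Fin d)) :=
  {x | ∀ ε : ℝ, 0 < ε → 0 < μ (ball x ε)}

/-! ### Auxiliary lemmas -/

lemma exists_dyadic {t : ℝ} (ht : 1 ≤ t) : ∃ k : ℕ, (2:ℝ)^k ≤ t ∧ t < 2^(k+1) := by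
  have h1 : 1 ≤ ⌊t⌋₊ := Nat.le_floor (by exact_mod_cast ht)
  refine ⟨Nat.log 2 ⌊t⌋₊, ?_, ?_⟩
  · calc ((2:ℝ) ^ Nat.log 2 ⌊t⌋₊) = ((2 ^ Nat.log 2 ⌊t⌋₊ : ℕ) : ℝ) := by push_cast; ring
      _ ≤ (⌊t⌋₊ : ℝ) := by exact_mod_cast Nat.pow_log_le_self 2 (by omega)
      _ ≤ t := Nat.floor_le (by linarith)
  · have h2 : ⌊t⌋₊ < 2 ^ (Nat.log 2 ⌊t⌋₊ + 1) := Nat.lt_pow_succ_log_self (by norm_num) _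
    have h3 : t < (⌊t⌋₊ : ℝ) + 1 := Nat.lt_floor_add_one t
    have h4 : (⌊t⌋₊ : ℝ) + 1 ≤ ((2 ^ (Nat.log 2 ⌊t⌋₊ + 1) : ℕ) : ℝ) := by
      exact_mod_cast Nat.succ_le_of_lt h2
    calc t < (⌊t⌋₊ : ℝ) + 1 := h3
      _ ≤ ((2 ^ (Nat.log 2 ⌊t⌋₊ + 1) : ℕ) : ℝ) := h4
      _ = (2:ℝ) ^ (Nat.log 2 ⌊t⌋₊ + 1) := by push_cast; ring

/-- Mean value estimate for `t ↦ t^(-c)`. -/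
lemma abs_rpow_neg_sub_le {c u v m : ℝ} (hc : 0 < c) (hm : 0 < m) (hu : m ≤ u) (hv : m ≤ v) :
    |u ^ (-c) - v ^ (-c)| ≤ c * m ^ (-c - 1) * |u - v| := by
  have hderiv : ∀ x ∈ Ici m,
      HasDerivWithinAt (fun t : ℝ => t ^ (-c)) (-c * x ^ (-c - 1)) (Ici m) x := fun x hx =>
    (Real.hasDerivAt_rpow_const (Or.inl (ne_of_gt (lt_of_lt_of_le hm hx)))).hasDerivWithinAt
  have hbound : ∀ x ∈ Ici m, ‖-c * x ^ (-c - 1)‖ ≤ c * m ^ (-c - 1) := by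
    intro x hx
    have hx0 : (0:ℝ) < x := lt_of_lt_of_le hm hx
    rw [norm_mul, Real.norm_eq_abs, Real.norm_eq_abs, abs_neg, abs_of_pos hc,
      abs_of_nonneg (Real.rpow_nonneg hx0.le _)]
    have : x ^ (-c - 1) ≤ m ^ (-c - 1) :=
      Real.rpow_le_rpow_of_nonpos hm hx (by linarith)
    exact mul_le_mul_of_nonneg_left this hc.le
  have h := Convex.norm_image_sub_le_of_norm_hasDerivWithin_le hderiv hbound (convex_Ici m) hv hu
  simpa [Real.norm_eq_abs] using h

lemma norm_rieszKernel_le (d : ℕ) {s c : ℝ} (hs : 0 < s) {w : EuclideanSpace ℝ (Fin d)}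
    (hc : 0 < c) (hcw : c ≤ ‖w‖) : ‖rieszKernel d s w‖ ≤ c ^ (-s) := by
  have hw : 0 < ‖w‖ := lt_of_lt_of_le hc hcw
  have h1 : (‖w‖ ^ (1 + s))⁻¹ * ‖w‖ = ‖w‖ ^ (-s) := by
    rw [← Real.rpow_neg (norm_nonneg w)]
    calc ‖w‖ ^ (-(1 + s)) * ‖w‖ = ‖w‖ ^ (-(1 + s)) * ‖w‖ ^ (1:ℝ) := by rw [Real.rpow_one]
      _ = ‖w‖ ^ (-(1 + s) + 1) := (Real.rpow_add hw _ _).symm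
      _ = ‖w‖ ^ (-s) := by congr 1; ring
  rw [rieszKernel, norm_smul, Real.norm_eq_abs,
    abs_of_nonneg (inv_nonneg.2 (Real.rpow_nonneg (norm_nonneg w) _)), h1]
  exact Real.rpow_le_rpow_of_nonpos hc hcw (by linarith)

lemma measurable_rieszKernel (d : ℕ) (s : ℝ) : Measurable (rieszKernel d s) := by
  have h : rieszKernel d s = fun w => (Real.exp (Real.log ‖w‖ * (1 + s)))⁻¹ • w := by
    funext w
    by_cases hw : w = 0
    · simp [rieszKernel, hw]
    · have hw' : (0:ℝ) < ‖w‖ := norm_pos_iff.2 hw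
      rw [rieszKernel, Real.rpow_def_of_pos hw']
  rw [h]
  exact ((Real.measurable_exp.comp
    ((Real.measurable_log.comp measurable_norm).mul_const _)).inv).smul measurable_id

lemma measurable_dist_rpow {d : ℕ} (z : EuclideanSpace ℝ (Fin d)) {c : ℝ} (hc : c ≠ 0) :
    Measurable fun y : EuclideanSpace ℝ (Fin d) => dist y z ^ c := by
  have hdm : Measurable fun y : EuclideanSpace ℝ (Fin d) => dist y z :=
    measurable_id.dist measurable_const
  have h : (fun y : EuclideanSpace ℝ (Fin d) => dist y z ^ c)
      = fun y => if dist y z = 0 then 0 else Real.exp (Real.log (dist y z) * c) := by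
    funext y
    by_cases h0 : dist y z = 0
    · simp [h0, Real.zero_rpow hc]
    · rw [if_neg h0, Real.rpow_def_of_pos (lt_of_le_of_ne dist_nonneg (Ne.symm h0))]
  rw [h]
  exact Measurable.ite (measurableSet_eq_fun hdm measurable_const) measurable_const
    (Real.measurable_exp.comp ((Real.measurable_log.comp hdm).mul_const _))

/-- Oscillation estimate for the Riesz kernel away from the singularity. -/
lemma rieszKernel_sub_bound (d : ℕ) {s : ℝ} (hs : 0 < s) {a b : EuclideanSpace ℝ (Fin d)}
    {t : ℝ} (ht : 0 < t) (ha : t / 2 ≤ ‖a‖) (hb : t / 2 ≤ ‖b‖) (hb' : ‖b‖ ≤ 3 / 2 * t) :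
    ‖rieszKernel d s a - rieszKernel d s b‖
      ≤ 2 ^ (1 + s) * (4 + 3 * s) * ‖a - b‖ * t ^ (-(1 + s)) := by
  have ht2 : (0:ℝ) < t / 2 := by linarith
  have hA : (0:ℝ) < ‖a‖ := lt_of_lt_of_le ht2 ha
  have hB : (0:ℝ) < ‖b‖ := lt_of_lt_of_le ht2 hb
  have hdecomp : rieszKernel d s a - rieszKernel d s b
      = (‖a‖ ^ (1 + s))⁻¹ • (a - b) + ((‖a‖ ^ (1 + s))⁻¹ - (‖b‖ ^ (1 + s))⁻¹) • b := by
    simp only [rieszKernel, smul_sub, sub_smul]; abel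
  have hinva : (‖a‖ ^ (1 + s))⁻¹ = ‖a‖ ^ (-(1 + s)) := (Real.rpow_neg (norm_nonneg a) _).symm
  have hinvb : (‖b‖ ^ (1 + s))⁻¹ = ‖b‖ ^ (-(1 + s)) := (Real.rpow_neg (norm_nonneg b) _).symm
  -- term 1 bound
  have hterm1 : ‖(‖a‖ ^ (1 + s))⁻¹ • (a - b)‖ ≤ (t/2) ^ (-(1 + s)) * ‖a - b‖ := by
    rw [norm_smul, Real.norm_eq_abs,
      abs_of_nonneg (inv_nonneg.2 (Real.rpow_nonneg (norm_nonneg a) _)), hinva]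
    exact mul_le_mul_of_nonneg_right
      (Real.rpow_le_rpow_of_nonpos ht2 ha (by linarith)) (norm_nonneg _)
  -- term 2 bound
  have hterm2 : ‖((‖a‖ ^ (1 + s))⁻¹ - (‖b‖ ^ (1 + s))⁻¹) • b‖
      ≤ ((1 + s) * (t/2) ^ (-(1 + s) - 1) * ‖a - b‖) * (3 / 2 * t) := by
    rw [norm_smul, Real.norm_eq_abs, hinva, hinvb]
    have h1 : |‖a‖ ^ (-(1 + s)) - ‖b‖ ^ (-(1 + s))|
        ≤ (1 + s) * (t/2) ^ (-(1 + s) - 1) * |‖a‖ - ‖b‖| :=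
      abs_rpow_neg_sub_le (by linarith) ht2 ha hb
    have h2 : |‖a‖ - ‖b‖| ≤ ‖a - b‖ := abs_norm_sub_norm_le a b
    have h3 : |‖a‖ ^ (-(1 + s)) - ‖b‖ ^ (-(1 + s))|
        ≤ (1 + s) * (t/2) ^ (-(1 + s) - 1) * ‖a - b‖ := by
      refine h1.trans (mul_le_mul_of_nonneg_left h2 ?_)
      positivity
    exact mul_le_mul h3 hb' (norm_nonneg b) (by positivity)
  -- rewrite powers of t/2
  have he : ∀ c : ℝ, (t/2) ^ c = t ^ c * 2 ^ (-c) := by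
    intro c
    rw [div_eq_mul_inv, Real.mul_rpow ht.le (by norm_num), Real.inv_rpow (by norm_num),
      ← Real.rpow_neg (by norm_num)]
  have e4 : t ^ (-(1 + s) - 1) * t = t ^ (-(1 + s)) := by
    nth_rewrite 2 [← Real.rpow_one t]
    rw [← Real.rpow_add ht]
    congr 1; ring
  have e5 : (2:ℝ) ^ (-(-(1 + s) - 1)) = 2 * 2 ^ (1 + s) := by
    rw [show -(-(1 + s) - 1) = 1 + (1 + s) by ring, Real.rpow_add (by norm_num), Real.rpow_one]
  calc ‖rieszKernel d s a - rieszKernel d s b‖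
      ≤ ‖(‖a‖ ^ (1 + s))⁻¹ • (a - b)‖
        + ‖((‖a‖ ^ (1 + s))⁻¹ - (‖b‖ ^ (1 + s))⁻¹) • b‖ := by rw [hdecomp]; exact norm_add_le _ _
    _ ≤ (t/2) ^ (-(1 + s)) * ‖a - b‖
        + ((1 + s) * (t/2) ^ (-(1 + s) - 1) * ‖a - b‖) * (3 / 2 * t) := add_le_add hterm1 hterm2
    _ = 2 ^ (1 + s) * (4 + 3 * s) * ‖a - b‖ * t ^ (-(1 + s)) := by
        rw [he (-(1 + s)), he (-(1 + s) - 1), neg_neg]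
        have : (1 + s) * (t ^ (-(1 + s) - 1) * (2:ℝ) ^ (-(-(1 + s) - 1))) * ‖a - b‖ * (3 / 2 * t)
            = (1 + s) * (2:ℝ) ^ (-(-(1 + s) - 1)) * ‖a - b‖ * (3 / 2) * (t ^ (-(1 + s) - 1) * t) := by
          ring
        rw [this, e4, e5]
        ring

/-- Dyadic decomposition bound for the integral of `dist(y,z)^(-(1+s))` far from `z`. -/
lemma far_integral_bound {d : ℕ} (ν : Measure (EuclideanSpace ℝ (Fin d))) [IsFiniteMeasure ν]
    (z : EuclideanSpace ℝ (Fin d)) {s R D : ℝ} (hs : 0 < s) (hR : 0 < R) (hD : 0 ≤ D)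
    (hgrow : ∀ r : ℝ, 0 < r → (ν (ball z r)).toReal ≤ D * r ^ s) :
    ∫ y in (ball z R)ᶜ, dist y z ^ (-(1 + s)) ∂ν ≤ 2 * 2 ^ s * D / R := by
  have hs1 : -(1 + s) ≠ 0 := by intro h; nlinarith [h]
  set h : EuclideanSpace ℝ (Fin d) → ℝ := fun y => dist y z ^ (-(1 + s)) with hh
  have hhm : Measurable h := measurable_dist_rpow z hs1
  have hhnn : ∀ y, 0 ≤ h y := fun y => Real.rpow_nonneg dist_nonneg _
  -- integrability on the far region
  have h_int : IntegrableOn h (ball z R)ᶜ ν := by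
    refine Integrable.mono' (integrable_const (R ^ (-(1 + s)))) hhm.aestronglyMeasurable ?_
    filter_upwards [ae_restrict_mem measurableSet_ball.compl] with y hy
    have hyR : R ≤ dist y z := by simpa [not_lt] using hy
    rw [Real.norm_eq_abs, abs_of_nonneg (hhnn y)]
    exact Real.rpow_le_rpow_of_nonpos hR hyR (by linarith)
  -- annuli
  set A : ℕ → Set (EuclideanSpace ℝ (Fin d)) :=
    fun k => (ball z (R * 2 ^ k))ᶜ ∩ ball z (R * 2 ^ (k + 1)) with hA
  have hAmeas : ∀ k, MeasurableSet (A k) := fun k =>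
    measurableSet_ball.compl.inter measurableSet_ball
  have hAkey : ∀ j k : ℕ, j < k → Disjoint (A j) (A k) := by
    intro j k hjk
    rw [Set.disjoint_left]
    rintro y ⟨_, hj2⟩ ⟨hk1, _⟩
    rw [mem_ball] at hj2
    rw [mem_compl_iff, mem_ball, not_lt] at hk1
    have h2 : (2:ℝ) ^ (j + 1) ≤ 2 ^ k := pow_le_pow_right₀ one_le_two hjk
    nlinarith
  have hdisj : Pairwise (Function.onFun Disjoint A) := by
    intro j k hne
    rcases hne.lt_or_gt with hlt | hlt
    · exact hAkey j k hlt
    · exact (hAkey k j hlt).symm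
  have hunion : (⋃ k, A k) = (ball z R)ᶜ := by
    ext y
    simp only [mem_iUnion, hA, mem_inter_iff, mem_compl_iff, mem_ball, not_lt]
    constructor
    · rintro ⟨k, hk1, _⟩
      have : R ≤ R * 2 ^ k := le_mul_of_one_le_right hR.le (one_le_pow₀ one_le_two)
      linarith
    · intro hy
      have ht1 : 1 ≤ dist y z / R := (one_le_div hR).2 hy
      obtain ⟨k, h1, h2⟩ := exists_dyadic ht1
      refine ⟨k, ?_, ?_⟩
      · have := (le_div_iff₀ hR).1 h1
        linarith
      · have := (div_lt_iff₀ hR).1 h2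
        linarith
  have hAsub : ∀ k, A k ⊆ (ball z R)ᶜ := by rw [← hunion]; exact fun k => subset_iUnion A k
  -- bound on each annulus
  have hAk_bound : ∀ k : ℕ, ∫ y in A k, h y ∂ν ≤ (2 ^ s * D / R) * (1/2) ^ k := by
    intro k
    have hrk : (0:ℝ) < R * 2 ^ k := by positivity
    have step1 : ∫ y in A k, h y ∂ν ≤ ∫ _ in A k, (R * 2 ^ k) ^ (-(1 + s)) ∂ν := by
      refine setIntegral_mono_on (h_int.mono_set (hAsub k))
        (integrableOn_const (measure_ne_top ν _)) (hAmeas k) ?_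
      rintro y ⟨hy1, _⟩
      rw [mem_compl_iff, mem_ball, not_lt] at hy1
      exact Real.rpow_le_rpow_of_nonpos hrk hy1 (by linarith)
    have step2 : ∫ _ in A k, (R * 2 ^ k) ^ (-(1 + s)) ∂ν
        = (ν (A k)).toReal * (R * 2 ^ k) ^ (-(1 + s)) := by
      rw [setIntegral_const, smul_eq_mul]; rfl
    have step3 : (ν (A k)).toReal ≤ D * (R * 2 ^ (k + 1)) ^ s := by
      refine le_trans (ENNReal.toReal_mono (measure_ne_top ν _)
        (measure_mono inter_subset_right)) (hgrow _ (by positivity))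
    have step5 : D * (R * 2 ^ (k + 1)) ^ s * (R * 2 ^ k) ^ (-(1 + s))
        = (2 ^ s * D / R) * (1/2) ^ k := by
      have e1 : (R * 2 ^ (k + 1) : ℝ) = (R * 2 ^ k) * 2 := by ring
      have e3 : (R * 2 ^ k : ℝ) ^ s * (R * 2 ^ k) ^ (-(1 + s)) = (R * 2 ^ k)⁻¹ := by
        rw [← Real.rpow_add hrk, show s + -(1 + s) = -1 by ring, Real.rpow_neg_one]
      rw [e1, Real.mul_rpow (by positivity) (by norm_num)]
      calc D * ((R * 2 ^ k) ^ s * 2 ^ s) * (R * 2 ^ k) ^ (-(1 + s))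
          = D * 2 ^ s * ((R * 2 ^ k) ^ s * (R * 2 ^ k) ^ (-(1 + s))) := by ring
        _ = D * 2 ^ s * (R * 2 ^ k)⁻¹ := by rw [e3]
        _ = (2 ^ s * D / R) * (1/2) ^ k := by
            rw [one_div, inv_pow, mul_inv]
            field_simp
    calc ∫ y in A k, h y ∂ν ≤ (ν (A k)).toReal * (R * 2 ^ k) ^ (-(1 + s)) := by
          rw [← step2]; exact step1
      _ ≤ D * (R * 2 ^ (k + 1)) ^ s * (R * 2 ^ k) ^ (-(1 + s)) :=
          mul_le_mul_of_nonneg_right step3 (Real.rpow_nonneg hrk.le _)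
      _ = (2 ^ s * D / R) * (1/2) ^ k := step5
  have hsum : HasSum (fun k => ∫ y in A k, h y ∂ν) (∫ y in ⋃ k, A k, h y ∂ν) :=
    hasSum_integral_iUnion hAmeas hdisj (by rw [hunion]; exact h_int)
  have hgeom : Summable (fun k : ℕ => (2 ^ s * D / R) * (1/2) ^ k) :=
    (summable_geometric_of_lt_one (by norm_num) (by norm_num)).mul_left _
  calc ∫ y in (ball z R)ᶜ, h y ∂ν = ∑' k, ∫ y in A k, h y ∂ν := by
        rw [← hunion]; exact hsum.tsum_eq.symm
    _ ≤ ∑' k : ℕ, (2 ^ s * D / R) * (1/2) ^ k := Summable.tsum_le_tsum hAk_bound hsum.summable hgeom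
    _ = (2 ^ s * D / R) * (1 - 1/2)⁻¹ := by
        rw [tsum_mul_left, tsum_geometric_of_lt_one (by norm_num) (by norm_num)]
    _ = 2 * 2 ^ s * D / R := by norm_num; ring

/-- Oscillation lemma for the Riesz transform of a signed measure `g dν`
(with `|g| ≤ 1`, so that `ν` is the total variation): if `Ω ⊆ B(z,ρ)` is at
distance at least `ερ` from the support of `ν`, then the oscillation of
`R(gν)` over `Ω` is at most
`(2/(ερ)^s) ν(B(z,Mρ/3)) + (C/M) sup_{r>0} ν(B(z,r))/r^s`. -/
theorem riesz_oscillation_lemma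
    (d : ℕ) (hd : 2 ≤ d) (s : ℝ) (hs : s ∈ Set.Ioo ((d : ℝ) - 1) d) :
    ∃ C : ℝ, 0 < C ∧
      ∀ (ν : Measure (EuclideanSpace ℝ (Fin d))), IsFiniteMeasure ν →
      ∀ (g : EuclideanSpace ℝ (Fin d) → ℝ), Measurable g → (∀ y, |g y| ≤ 1) →
      ∀ (z : EuclideanSpace ℝ (Fin d)) (ρ ε M : ℝ)
        (Ω : Set (EuclideanSpace ℝ (Fin d))),
        0 < ρ → ε ∈ Set.Ioo (0 : ℝ) 1 → 6 ≤ M → Ω ⊆ ball z ρ →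
        (∀ w ∈ Ω, ∀ y ∈ measSupport d ν, ε * ρ ≤ dist w y) →
        ∀ D : ℝ, 0 ≤ D → (∀ r : ℝ, 0 < r → (ν (ball z r)).toReal ≤ D * r ^ s) →
        ∀ x ∈ Ω, ∀ x' ∈ Ω,
          ‖(∫ y, g y • rieszKernel d s (y - x) ∂ν) -
              ∫ y, g y • rieszKernel d s (y - x') ∂ν‖ ≤
            2 / (ε * ρ) ^ s * (ν (ball z (M * ρ / 3))).toReal + C / M * D := by
  have hs0 : (0:ℝ) < s := by
    have : (1:ℝ) ≤ (d:ℝ) - 1 := by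
      have : (2:ℝ) ≤ (d:ℝ) := by exact_mod_cast hd
      linarith
    linarith [hs.1]
  refine ⟨12 * (2 ^ (1 + s) * (4 + 3 * s)) * 2 ^ s, by positivity, ?_⟩
  intro ν hfin g hgmeas hgbd z ρ ε M Ω hρ hε hM hΩ hdist D hD hgrow x hx x' hx'
  haveI := hfin
  set R : ℝ := M * ρ / 3 with hRdef
  have hM0 : (0:ℝ) < M := by linarith
  have hR : (0:ℝ) < R := by positivity
  have hR2ρ : 2 * ρ ≤ R := by rw [hRdef]; nlinarith
  have hερ : (0:ℝ) < ε * ρ := mul_pos hε.1 hρ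
  set f : EuclideanSpace ℝ (Fin d) → EuclideanSpace ℝ (Fin d) :=
    fun y => g y • rieszKernel d s (y - x) with hf
  set f' : EuclideanSpace ℝ (Fin d) → EuclideanSpace ℝ (Fin d) :=
    fun y => g y • rieszKernel d s (y - x') with hf'
  have hfm : Measurable f :=
    hgmeas.smul ((measurable_rieszKernel d s).comp (measurable_id.sub measurable_const))
  have hf'm : Measurable f' :=
    hgmeas.smul ((measurable_rieszKernel d s).comp (measurable_id.sub measurable_const))
  -- a.e. point is in the support
  have hae : ∀ᵐ y ∂ν, y ∈ measSupport d ν := by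
    rw [ae_iff]
    refine measure_null_of_locally_null _ fun y hy => ?_
    simp only [measSupport, mem_setOf_eq, not_forall] at hy
    obtain ⟨ε₀, hε₀, h0⟩ := hy
    refine ⟨ball y ε₀, mem_nhdsWithin_of_mem_nhds (ball_mem_nhds _ hε₀), ?_⟩
    simpa [pos_iff_ne_zero, not_not] using h0
  -- a.e. bound on f, f'
  have hbd : ∀ᵐ y ∂ν, ‖f y‖ ≤ (ε * ρ) ^ (-s) ∧ ‖f' y‖ ≤ (ε * ρ) ^ (-s) := by
    filter_upwards [hae] with y hy
    have h1 : ε * ρ ≤ ‖y - x‖ := by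
      have := hdist x hx y hy; rwa [dist_eq_norm', ] at this
    have h2 : ε * ρ ≤ ‖y - x'‖ := by
      have := hdist x' hx' y hy; rwa [dist_eq_norm'] at this
    constructor
    · calc ‖f y‖ = |g y| * ‖rieszKernel d s (y - x)‖ := by rw [hf, norm_smul, Real.norm_eq_abs]
        _ ≤ 1 * ((ε * ρ) ^ (-s)) :=
          mul_le_mul (hgbd y) (norm_rieszKernel_le d hs0 hερ h1) (norm_nonneg _) one_pos.le
        _ = (ε * ρ) ^ (-s) := one_mul _
    · calc ‖f' y‖ = |g y| * ‖rieszKernel d s (y - x')‖ := by rw [hf', norm_smul, Real.norm_eq_abs]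
        _ ≤ 1 * ((ε * ρ) ^ (-s)) :=
          mul_le_mul (hgbd y) (norm_rieszKernel_le d hs0 hερ h2) (norm_nonneg _) one_pos.le
        _ = (ε * ρ) ^ (-s) := one_mul _
  have hfint : Integrable f ν :=
    Integrable.mono' (integrable_const ((ε * ρ) ^ (-s))) hfm.aestronglyMeasurable
      (hbd.mono fun y h => h.1)
  have hf'int : Integrable f' ν :=
    Integrable.mono' (integrable_const ((ε * ρ) ^ (-s))) hf'm.aestronglyMeasurable
      (hbd.mono fun y h => h.2)
  have hsub : Integrable (fun y => f y - f' y) ν := hfint.sub hf'int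
  -- the constant 2/(ερ)^s
  have hcst : 2 * (ε * ρ) ^ (-s) = 2 / (ε * ρ) ^ s := by
    rw [Real.rpow_neg hερ.le, div_eq_mul_inv]
  -- near part
  have hnear : ∫ y in ball z R, ‖f y - f' y‖ ∂ν
      ≤ 2 / (ε * ρ) ^ s * (ν (ball z R)).toReal := by
    have : ∫ y in ball z R, ‖f y - f' y‖ ∂ν ≤ ∫ _ in ball z R, 2 / (ε * ρ) ^ s ∂ν := by
      refine setIntegral_mono_ae hsub.norm.integrableOn
        (integrableOn_const (measure_ne_top ν _)) ?_
      filter_upwards [hbd] with y hy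
      calc ‖f y - f' y‖ ≤ ‖f y‖ + ‖f' y‖ := norm_sub_le _ _
        _ ≤ 2 * (ε * ρ) ^ (-s) := by linarith [hy.1, hy.2]
        _ = 2 / (ε * ρ) ^ s := hcst
    rwa [setIntegral_const, smul_eq_mul, mul_comm] at this
  -- far part : pointwise bound
  have hfar_pt : ∀ y ∈ (ball z R)ᶜ,
      ‖f y - f' y‖ ≤ (2 ^ (1 + s) * (4 + 3 * s) * (2 * ρ)) * dist y z ^ (-(1 + s)) := by
    intro y hy
    have ht : R ≤ dist y z := by simpa [not_lt] using hy
    have htpos : (0:ℝ) < dist y z := lt_of_lt_of_le hR ht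
    have hxz : dist x z < ρ := mem_ball.mp (hΩ hx)
    have hx'z : dist x' z < ρ := mem_ball.mp (hΩ hx')
    have hρt : 2 * ρ ≤ dist y z := le_trans hR2ρ ht
    have ha : dist y z / 2 ≤ ‖y - x‖ := by
      have htri := dist_triangle y x z
      rw [← dist_eq_norm]
      linarith
    have hb : dist y z / 2 ≤ ‖y - x'‖ := by
      have htri := dist_triangle y x' z
      rw [← dist_eq_norm]
      linarith
    have hb' : ‖y - x'‖ ≤ 3 / 2 * dist y z := by
      have htri := dist_triangle y z x'
      rw [← dist_eq_norm]
      rw [dist_comm z x'] at htri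
      linarith
    have hK := rieszKernel_sub_bound d hs0 htpos ha hb hb'
    have habd : ‖(y - x) - (y - x')‖ ≤ 2 * ρ := by
      have : (y - x) - (y - x') = x' - x := by abel
      rw [this, ← dist_eq_norm]
      have htri := dist_triangle x' z x
      rw [dist_comm z x] at htri
      linarith
    have hfd : f y - f' y = g y • (rieszKernel d s (y - x) - rieszKernel d s (y - x')) := by
      rw [hf, hf', smul_sub]
    calc ‖f y - f' y‖ = |g y| * ‖rieszKernel d s (y - x) - rieszKernel d s (y - x')‖ := by
          rw [hfd, norm_smul, Real.norm_eq_abs]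
      _ ≤ 1 * ‖rieszKernel d s (y - x) - rieszKernel d s (y - x')‖ :=
          mul_le_mul_of_nonneg_right (hgbd y) (norm_nonneg _)
      _ = ‖rieszKernel d s (y - x) - rieszKernel d s (y - x')‖ := one_mul _
      _ ≤ 2 ^ (1 + s) * (4 + 3 * s) * ‖(y - x) - (y - x')‖ * dist y z ^ (-(1 + s)) := hK
      _ ≤ (2 ^ (1 + s) * (4 + 3 * s) * (2 * ρ)) * dist y z ^ (-(1 + s)) := by
          have h1 : (0:ℝ) ≤ 2 ^ (1 + s) * (4 + 3 * s) := by positivity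
          have h2 : (0:ℝ) ≤ dist y z ^ (-(1 + s)) := Real.rpow_nonneg dist_nonneg _
          exact mul_le_mul_of_nonneg_right (mul_le_mul_of_nonneg_left habd h1) h2
  -- integrability of the comparison function
  have hs1 : -(1 + s) ≠ 0 := by intro hcon; nlinarith [hcon]
  have h_int : IntegrableOn (fun y => dist y z ^ (-(1 + s))) (ball z R)ᶜ ν := by
    refine Integrable.mono' (integrable_const (R ^ (-(1 + s))))
      (measurable_dist_rpow z hs1).aestronglyMeasurable ?_
    filter_upwards [ae_restrict_mem measurableSet_ball.compl] with y hy
    have hyR : R ≤ dist y z := by simpa [not_lt] using hy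
    rw [Real.norm_eq_abs, abs_of_nonneg (Real.rpow_nonneg dist_nonneg _)]
    exact Real.rpow_le_rpow_of_nonpos hR hyR (by linarith)
  -- far part
  have hfar : ∫ y in (ball z R)ᶜ, ‖f y - f' y‖ ∂ν
      ≤ (12 * (2 ^ (1 + s) * (4 + 3 * s)) * 2 ^ s) / M * D := by
    have step1 : ∫ y in (ball z R)ᶜ, ‖f y - f' y‖ ∂ν
        ≤ ∫ y in (ball z R)ᶜ, (2 ^ (1 + s) * (4 + 3 * s) * (2 * ρ)) * dist y z ^ (-(1 + s)) ∂ν :=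
      setIntegral_mono_on hsub.norm.integrableOn (h_int.const_mul _)
        measurableSet_ball.compl hfar_pt
    have step2 : ∫ y in (ball z R)ᶜ, (2 ^ (1 + s) * (4 + 3 * s) * (2 * ρ)) * dist y z ^ (-(1 + s)) ∂ν
        = (2 ^ (1 + s) * (4 + 3 * s) * (2 * ρ)) * ∫ y in (ball z R)ᶜ, dist y z ^ (-(1 + s)) ∂ν :=
      integral_const_mul _ _
    have step3 : ∫ y in (ball z R)ᶜ, dist y z ^ (-(1 + s)) ∂ν ≤ 2 * 2 ^ s * D / R :=
      far_integral_bound ν z hs0 hR hD hgrow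
    have hc0 : (0:ℝ) ≤ 2 ^ (1 + s) * (4 + 3 * s) * (2 * ρ) := by positivity
    have step4 : (2 ^ (1 + s) * (4 + 3 * s) * (2 * ρ)) * (2 * 2 ^ s * D / R)
        = (12 * (2 ^ (1 + s) * (4 + 3 * s)) * 2 ^ s) / M * D := by
      rw [hRdef]
      field_simp
      ring
    calc ∫ y in (ball z R)ᶜ, ‖f y - f' y‖ ∂ν
        ≤ (2 ^ (1 + s) * (4 + 3 * s) * (2 * ρ)) * ∫ y in (ball z R)ᶜ, dist y z ^ (-(1 + s)) ∂ν := by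
          rw [← step2]; exact step1
      _ ≤ (2 ^ (1 + s) * (4 + 3 * s) * (2 * ρ)) * (2 * 2 ^ s * D / R) :=
          mul_le_mul_of_nonneg_left step3 hc0
      _ = (12 * (2 ^ (1 + s) * (4 + 3 * s)) * 2 ^ s) / M * D := step4
  -- assemble
  calc ‖(∫ y, f y ∂ν) - ∫ y, f' y ∂ν‖ = ‖∫ y, f y - f' y ∂ν‖ := by
        rw [integral_sub hfint hf'int]
    _ ≤ ∫ y, ‖f y - f' y‖ ∂ν := norm_integral_le_integral_norm _
    _ = (∫ y in ball z R, ‖f y - f' y‖ ∂ν) + ∫ y in (ball z R)ᶜ, ‖f y - f' y‖ ∂ν :=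
        (integral_add_compl measurableSet_ball hsub.norm).symm
    _ ≤ 2 / (ε * ρ) ^ s * (ν (ball z R)).toReal
        + (12 * (2 ^ (1 + s) * (4 + 3 * s)) * 2 ^ s) / M * D := add_le_add hnear hfar
end

section
/- Upper bound for the Calderón–Zygmund capacity from an a.e. potential bound: suppose s ∈ (d−1, d) and Φ(t) = exp(−1/t^β) for a suitable β = β(s,d) > 0. Assume the following two facts: (i) (weak-type potential bound) there is A > 1 depending only on s,d such that every nonnegative measure μ with ||R(μ)||_{L^∞(m_d)} ≤ 1 satisfies μ({x : W_{Φ,s}(μ)(x) > A}) ≤ μ(R^d)/4; (ii) the maximum principle and the capacity-level comparison cap^{(A)} ≈ cap^{(1)} hold for Φ. Then there is a constant C > 0 depending only on s, d such that γ_s(E) ≤ C · cap_{Φ,s}(E) for every compact set E ⊂ R^d, where γ_s(E) = sup{μ(E) : supp μ ⊂ E, ||R(μ)||_{L^∞} ≤ 1} and R(μ)(x) = ∫ (y−x)/|y−x|^{1+s} dμ(y). -/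
open MeasureTheory Metric Set
open scoped ENNReal
open Filter
open scoped Topology

/-- The `s`-dimensional Riesz transform of a measure. -/
noncomputable def rieszTransform (d : ℕ) (s : ℝ)
    (μ : Measure (EuclideanSpace ℝ (Fin d))) (x : EuclideanSpace ℝ (Fin d)) :
    EuclideanSpace ℝ (Fin d) :=
  ∫ y, (‖y - x‖ ^ (1 + s))⁻¹ • (y - x) ∂μ

/-- The exponential gauge `Φ(t) = e^{-1/t^β}` (with `Φ(0) = 0`). -/
noncomputable def expGauge (β t : ℝ) : ℝ :=
  if t ≤ 0 then 0 else Real.exp (-(1 / t ^ β))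

/-- The nonlinear capacity at level `A` associated to the gauge `Φ`. -/
noncomputable def capPhiLevel (d : ℕ) (s : ℝ) (Φ : ℝ → ℝ) (A : ℝ)
    (E : Set (EuclideanSpace ℝ (Fin d))) : ℝ≥0∞ :=
  sSup {m : ℝ≥0∞ | ∃ μ : Measure (EuclideanSpace ℝ (Fin d)), IsFiniteMeasure μ ∧
    μ Eᶜ = 0 ∧ (∀ x, wolffPotential d s Φ μ x ≤ ENNReal.ofReal A) ∧ m = μ E}

/-- The `s`-dimensional Calderón–Zygmund capacity. -/
noncomputable def czCapacity (d : ℕ) (s : ℝ)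
    (E : Set (EuclideanSpace ℝ (Fin d))) : ℝ≥0∞ :=
  sSup {m : ℝ≥0∞ | ∃ μ : Measure (EuclideanSpace ℝ (Fin d)), IsFiniteMeasure μ ∧
    μ Eᶜ = 0 ∧ (∀ᵐ x ∂(volume : Measure (EuclideanSpace ℝ (Fin d))),
      ‖rieszTransform d s μ x‖ ≤ 1) ∧ m = μ E}

lemma expGauge_nonneg (β t : ℝ) : 0 ≤ expGauge β t := by
  unfold expGauge; split
  · exact le_refl _
  · exact (Real.exp_pos _).le

lemma expGauge_mono {β : ℝ} (hβ : 0 < β) : Monotone (expGauge β) := by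
  intro a b hab
  unfold expGauge
  rcases le_or_gt b 0 with hb | hb
  · rw [if_pos (hab.trans hb), if_pos hb]
  · rw [if_neg (not_le.2 hb)]
    rcases le_or_gt a 0 with ha | ha
    · rw [if_pos ha]; exact (Real.exp_pos _).le
    · rw [if_neg (not_le.2 ha)]
      apply Real.exp_le_exp.2
      apply neg_le_neg
      apply one_div_le_one_div_of_le (Real.rpow_pos_of_pos ha β)
      exact Real.rpow_le_rpow ha.le hab hβ.le

lemma tendsto_expGauge {β : ℝ} (hβ : 0 < β) {t : ℕ → ℝ} {t₀ : ℝ}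
    (h0 : ∀ n, 0 ≤ t n) (hle : ∀ n, t n ≤ t₀)
    (ht : Tendsto t atTop (𝓝 t₀)) :
    Tendsto (fun n => expGauge β (t n)) atTop (𝓝 (expGauge β t₀)) := by
  rcases eq_or_lt_of_le ((h0 0).trans (hle 0)) with h | h
  · have hz : ∀ n, t n = 0 := fun n => le_antisymm (h ▸ hle n) (h0 n)
    have : (fun n => expGauge β (t n)) = fun _ => expGauge β t₀ := by
      funext n; rw [hz n, ← h]
    rw [this]; exact tendsto_const_nhds
  · have h1 : ContinuousAt (fun u : ℝ => u ^ β) t₀ :=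
      Real.continuousAt_rpow_const t₀ β (Or.inl (ne_of_gt h))
    have h2 : t₀ ^ β ≠ 0 := (Real.rpow_pos_of_pos h β).ne'
    have hcont : ContinuousAt (fun u : ℝ => Real.exp (-(1 / u ^ β))) t₀ :=
      Real.continuous_exp.continuousAt.comp ((continuousAt_const.div h1 h2).neg)
    have hev : ∀ᶠ n in atTop, Real.exp (-(1 / t n ^ β)) = expGauge β (t n) := by
      filter_upwards [ht.eventually (eventually_gt_nhds h)] with n hn
      exact (if_neg (not_le.2 hn)).symm
    have heq : expGauge β t₀ = Real.exp (-(1 / t₀ ^ β)) := if_neg (not_le.2 h)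
    rw [heq]
    exact (hcont.tendsto.comp ht).congr' hev

variable {d : ℕ}

lemma measurable_wolff_integrand {β : ℝ} (hβ : 0 < β) (s : ℝ)
    (μ : Measure (EuclideanSpace ℝ (Fin d))) (y : EuclideanSpace ℝ (Fin d)) :
    Measurable fun r : ℝ =>
      ENNReal.ofReal (expGauge β ((μ (ball y r)).toReal / r ^ s) / r) := by
  have m1 : Measurable fun r : ℝ => μ (ball y r) :=
    Monotone.measurable fun r₁ r₂ h => measure_mono (ball_subset_ball h)
  have m2 : Measurable fun r : ℝ => (μ (ball y r)).toReal / r ^ s :=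
    (ENNReal.measurable_toReal.comp m1).div (by fun_prop)
  exact ENNReal.measurable_ofReal.comp
    (((expGauge_mono hβ).measurable.comp m2).div measurable_id)

lemma integrand_mono {β s : ℝ} (hβ : 0 < β) {r : ℝ} (hr : 0 < r) {a b : ℝ≥0∞}
    (hb : b ≠ ⊤) (hab : a ≤ b) :
    ENNReal.ofReal (expGauge β (a.toReal / r ^ s) / r) ≤
      ENNReal.ofReal (expGauge β (b.toReal / r ^ s) / r) := by
  have hrs : (0:ℝ) < r ^ s := Real.rpow_pos_of_pos hr s
  apply ENNReal.ofReal_le_ofReal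
  have h1 : a.toReal / r ^ s ≤ b.toReal / r ^ s :=
    div_le_div_of_nonneg_right (ENNReal.toReal_mono hb hab) hrs.le
  exact div_le_div_of_nonneg_right (expGauge_mono hβ h1) hr.le

lemma integrand_le_liminf {s β : ℝ} (hβ : 0 < β)
    (μ : Measure (EuclideanSpace ℝ (Fin d))) [IsFiniteMeasure μ]
    {u : ℕ → EuclideanSpace ℝ (Fin d)} {x : EuclideanSpace ℝ (Fin d)}
    (hu : Tendsto u atTop (𝓝 x)) (r : ℝ) :
    ENNReal.ofReal (expGauge β ((μ (ball x r)).toReal / r ^ s) / r) ≤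
      liminf (fun n =>
        ENNReal.ofReal (expGauge β ((μ (ball (u n) r)).toReal / r ^ s) / r)) atTop := by
  rcases le_or_gt r 0 with hr | hr
  · have h0 : expGauge β ((μ (ball x r)).toReal / r ^ s) / r ≤ 0 :=
      div_nonpos_of_nonneg_of_nonpos (expGauge_nonneg _ _) hr
    rw [ENNReal.ofReal_eq_zero.2 h0]
    exact zero_le
  · set rad : ℕ → ℝ := fun k => r - r / (k + 2) with hrad
    have hk2 : ∀ k : ℕ, (0:ℝ) < (k:ℝ) + 2 := fun k => by positivity
    have hradlt : ∀ k, rad k < r := fun k => by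
      have : 0 < r / ((k:ℝ) + 2) := div_pos hr (hk2 k)
      simp only [hrad]; linarith
    have hradmono : Monotone rad := by
      intro k₁ k₂ h
      have hc : (k₁:ℝ) ≤ (k₂:ℝ) := Nat.cast_le.2 h
      have : r / ((k₂:ℝ) + 2) ≤ r / ((k₁:ℝ) + 2) := by
        rw [div_le_div_iff₀ (hk2 k₂) (hk2 k₁)]
        nlinarith [hr.le]
      simp only [hrad]; linarith
    have hUnion : (⋃ k, ball x (rad k)) = ball x r := by
      apply Subset.antisymm
      · exact iUnion_subset fun k => ball_subset_ball (hradlt k).le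
      · intro z hz
        rw [mem_ball] at hz
        have hεpos : 0 < r - dist z x := sub_pos.2 hz
        obtain ⟨k, hk⟩ := exists_nat_gt (r / (r - dist z x))
        refine mem_iUnion.2 ⟨k, ?_⟩
        rw [mem_ball]
        have h2 : r / ((k:ℝ) + 2) < r - dist z x := by
          rw [div_lt_iff₀ (hk2 k)]
          have hdr : r / (r - dist z x) * (r - dist z x) = r := by
            field_simp
          nlinarith [mul_lt_mul_of_pos_right (show r / (r - dist z x) < (k:ℝ) + 2 by linarith) hεpos]
        simp only [hrad]; linarith
    have hmeas : Tendsto (fun k => μ (ball x (rad k))) atTop (𝓝 (μ (ball x r))) := by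
      have := tendsto_measure_iUnion_atTop (μ := μ) (s := fun k => ball x (rad k))
        (fun k₁ k₂ h => ball_subset_ball (hradmono h))
      rwa [hUnion] at this
    have htoReal : Tendsto (fun k => (μ (ball x (rad k))).toReal) atTop
        (𝓝 (μ (ball x r)).toReal) :=
      (ENNReal.tendsto_toReal (measure_ne_top μ _)).comp hmeas
    have ht : Tendsto (fun k => (μ (ball x (rad k))).toReal / r ^ s) atTop
        (𝓝 ((μ (ball x r)).toReal / r ^ s)) := htoReal.div_const _
    have hrs : (0:ℝ) < r ^ s := Real.rpow_pos_of_pos hr s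
    have h0 : ∀ k, 0 ≤ (μ (ball x (rad k))).toReal / r ^ s :=
      fun k => div_nonneg ENNReal.toReal_nonneg hrs.le
    have hle : ∀ k, (μ (ball x (rad k))).toReal / r ^ s ≤ (μ (ball x r)).toReal / r ^ s :=
      fun k => div_le_div_of_nonneg_right
        (ENNReal.toReal_mono (measure_ne_top μ _)
          (measure_mono (ball_subset_ball (hradlt k).le))) hrs.le
    have hΦ : Tendsto (fun k => ENNReal.ofReal
        (expGauge β ((μ (ball x (rad k))).toReal / r ^ s) / r)) atTop
        (𝓝 (ENNReal.ofReal (expGauge β ((μ (ball x r)).toReal / r ^ s) / r))) :=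
      ENNReal.tendsto_ofReal ((tendsto_expGauge hβ h0 hle ht).div_const r)
    refine le_of_tendsto' hΦ fun k => ?_
    refine Filter.le_liminf_of_le (by isBoundedDefault) ?_
    have hδ : 0 < r - rad k := sub_pos.2 (hradlt k)
    obtain ⟨N, hN⟩ := Metric.tendsto_atTop.1 hu _ hδ
    rw [eventually_atTop]
    refine ⟨N, fun n hn => ?_⟩
    apply integrand_mono hβ hr (measure_ne_top μ _)
    apply measure_mono
    intro z hz
    rw [mem_ball] at hz ⊢
    calc dist z (u n) ≤ dist z x + dist x (u n) := dist_triangle _ _ _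
      _ < rad k + (r - rad k) := by
          rw [dist_comm x (u n)]
          exact add_lt_add hz (hN n hn)
      _ = r := by ring


lemma wolff_le_liminf {s β : ℝ} (hβ : 0 < β)
    (μ : Measure (EuclideanSpace ℝ (Fin d))) [IsFiniteMeasure μ]
    {u : ℕ → EuclideanSpace ℝ (Fin d)} {x : EuclideanSpace ℝ (Fin d)}
    (hu : Tendsto u atTop (𝓝 x)) :
    wolffPotential d s (expGauge β) μ x ≤
      liminf (fun n => wolffPotential d s (expGauge β) μ (u n)) atTop := by
  unfold wolffPotential
  calc ∫⁻ r in Set.Ioi (0:ℝ),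
        ENNReal.ofReal (expGauge β ((μ (ball x r)).toReal / r ^ s) / r)
      ≤ ∫⁻ r in Set.Ioi (0:ℝ), liminf (fun n =>
          ENNReal.ofReal (expGauge β ((μ (ball (u n) r)).toReal / r ^ s) / r)) atTop :=
        lintegral_mono fun r => integrand_le_liminf hβ μ hu r
    _ ≤ liminf (fun n => ∫⁻ r in Set.Ioi (0:ℝ),
          ENNReal.ofReal (expGauge β ((μ (ball (u n) r)).toReal / r ^ s) / r)) atTop :=
        lintegral_liminf_le fun n => measurable_wolff_integrand hβ s μ (u n)

lemma isClosed_wolff_le {s β : ℝ} (hβ : 0 < β)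
    (μ : Measure (EuclideanSpace ℝ (Fin d))) [IsFiniteMeasure μ] (c : ℝ≥0∞) :
    IsClosed {x | wolffPotential d s (expGauge β) μ x ≤ c} := by
  apply IsSeqClosed.isClosed
  intro u x hmem hux
  calc wolffPotential d s (expGauge β) μ x
      ≤ liminf (fun n => wolffPotential d s (expGauge β) μ (u n)) atTop :=
        wolff_le_liminf hβ μ hux
    _ ≤ c := Filter.liminf_le_of_frequently_le' (Frequently.of_forall fun n => hmem n)

lemma wolff_mono_measure {s β : ℝ} (hβ : 0 < β)
    {μ ν : Measure (EuclideanSpace ℝ (Fin d))} [IsFiniteMeasure ν]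
    (h : μ ≤ ν) (x : EuclideanSpace ℝ (Fin d)) :
    wolffPotential d s (expGauge β) μ x ≤ wolffPotential d s (expGauge β) ν x := by
  unfold wolffPotential
  apply lintegral_mono_ae
  rw [ae_restrict_iff' measurableSet_Ioi]
  apply ae_of_all
  intro r hr
  exact integrand_mono hβ hr (measure_ne_top ν _) (h _)

/-- Upper bound for the Calderón–Zygmund capacity in terms of the nonlinear
capacity with exponential gauge, assuming the weak-type potential bound, the
maximum principle, and the capacity-level comparison. -/
theorem czCapacity_le_capPhi
    (d : ℕ) (hd : 2 ≤ d) (s : ℝ) (hs : s ∈ Set.Ioo ((d : ℝ) - 1) d)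
    (β : ℝ) (hβ : 0 < β)
    (A : ℝ) (hA : 1 < A)
    (hweak : ∀ μ : Measure (EuclideanSpace ℝ (Fin d)), IsFiniteMeasure μ →
      (∀ᵐ x ∂(volume : Measure (EuclideanSpace ℝ (Fin d))),
        ‖rieszTransform d s μ x‖ ≤ 1) →
      μ {x | ENNReal.ofReal A < wolffPotential d s (expGauge β) μ x} ≤
        μ Set.univ / 4)
    (hmax : ∀ μ : Measure (EuclideanSpace ℝ (Fin d)), IsFiniteMeasure μ →
      ∀ A' : ℝ, 0 < A' →
      (∀ x ∈ measSupport d μ,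
        wolffPotential d s (expGauge β) μ x ≤ ENNReal.ofReal A') →
      ∀ x, wolffPotential d s (expGauge β)
          (ENNReal.ofReal ((2 : ℝ) ^ (-s)) • μ) x ≤ ENNReal.ofReal A')
    (C₀ : ℝ) (hC₀ : 0 < C₀)
    (hcomp : ∀ E : Set (EuclideanSpace ℝ (Fin d)), IsCompact E →
      capPhiLevel d s (expGauge β) A E ≤
        ENNReal.ofReal C₀ * capPhiLevel d s (expGauge β) 1 E) :
    ∃ C : ℝ, 0 < C ∧ ∀ E : Set (EuclideanSpace ℝ (Fin d)), IsCompact E →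
      czCapacity d s E ≤ ENNReal.ofReal C * capPhiLevel d s (expGauge β) 1 E := by
  refine ⟨4 * 2 ^ s * C₀, by positivity, ?_⟩
  intro E hE
  rw [czCapacity]
  apply sSup_le
  rintro m ⟨μ, hfin, hEc, hRiesz, rfl⟩
  haveI := hfin
  have hEmeas : MeasurableSet E := hE.isClosed.measurableSet
  have hμuniv : μ Set.univ = μ E := by
    rw [← measure_add_measure_compl hEmeas, hEc, add_zero]
  set T := {x | wolffPotential d s (expGauge β) μ x ≤ ENNReal.ofReal A} with hT
  have hTclosed : IsClosed T := isClosed_wolff_le hβ μ _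
  have hTc : Tᶜ = {x | ENNReal.ofReal A < wolffPotential d s (expGauge β) μ x} := by
    ext y; simp [hT, not_le]
  have hweak' := hweak μ hfin hRiesz
  set ω := μ.restrict T with hω
  have hωle : ω ≤ μ := Measure.restrict_le_self
  have hωE : ω E = μ (E ∩ T) := Measure.restrict_apply hEmeas
  -- μ E ≤ 4 * ω E
  have hsplit : μ E ≤ ω E + μ E / 4 := by
    calc μ E = μ (E ∩ T) + μ (E \ T) :=
          (measure_inter_add_diff E hTclosed.measurableSet).symm
      _ ≤ ω E + μ Tᶜ := by
          rw [hωE]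
          exact add_le_add le_rfl (measure_mono fun y hy => hy.2)
      _ ≤ ω E + μ E / 4 := by
          rw [hTc, ← hμuniv]
          exact add_le_add le_rfl hweak'
  have hfour : μ E ≤ ω E * 4 := by
    have h4 : μ E * 4 ≤ (ω E + μ E / 4) * 4 := mul_le_mul_left hsplit 4
    rw [add_mul, ENNReal.div_mul_cancel (by norm_num) (by norm_num)] at h4
    have h4' : μ E * 3 + μ E ≤ ω E * 4 + μ E := by
      calc μ E * 3 + μ E = μ E * 4 := by ring
        _ ≤ ω E * 4 + μ E := h4
    have h3 : μ E * 3 ≤ ω E * 4 :=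
      (ENNReal.add_le_add_iff_right (measure_ne_top μ E)).1 h4'
    calc μ E ≤ μ E * 3 := le_mul_of_one_le_right zero_le (by norm_num)
      _ ≤ ω E * 4 := h3
  -- the restricted measure satisfies the support bound
  have hsupp : ∀ y ∈ measSupport d ω,
      wolffPotential d s (expGauge β) ω y ≤ ENNReal.ofReal A := by
    intro y hy
    have hyT : y ∈ T := by
      rw [← hTclosed.closure_eq, Metric.mem_closure_iff]
      intro ε hε
      have hpos := hy ε hε
      rw [hω, Measure.restrict_apply measurableSet_ball] at hpos
      obtain ⟨z, hzb, hzT⟩ := nonempty_of_measure_ne_zero hpos.ne'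
      exact ⟨z, hzT, by rw [dist_comm]; exact mem_ball.1 hzb⟩
    exact le_trans (wolff_mono_measure hβ hωle y) hyT
  have hApos : (0:ℝ) < A := lt_trans zero_lt_one hA
  have hν := hmax ω inferInstance A hApos hsupp
  set ν := ENNReal.ofReal ((2 : ℝ) ^ (-s)) • ω with hνdef
  haveI hνfin : IsFiniteMeasure ν := by
    constructor
    rw [hνdef, Measure.smul_apply, smul_eq_mul]
    exact ENNReal.mul_lt_top ENNReal.ofReal_lt_top (measure_lt_top ω _)
  have hνEc : ν Eᶜ = 0 := by
    rw [hνdef, Measure.smul_apply, smul_eq_mul]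
    have : ω Eᶜ = 0 := by
      rw [hω, Measure.restrict_apply hEmeas.compl]
      exact le_antisymm (le_trans (measure_mono inter_subset_left) hEc.le) zero_le
    rw [this, mul_zero]
  have hνE_le : ν E ≤ capPhiLevel d s (expGauge β) A E :=
    le_sSup ⟨ν, hνfin, hνEc, hν, rfl⟩
  have hωeq : ω E = ENNReal.ofReal ((2:ℝ) ^ s) * ν E := by
    have h2 : (2:ℝ) ^ s * (2:ℝ) ^ (-s) = 1 := by
      rw [← Real.rpow_add (by norm_num : (0:ℝ) < 2)]; simp
    rw [hνdef, Measure.smul_apply, smul_eq_mul, ← mul_assoc,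
      ← ENNReal.ofReal_mul (by positivity), h2, ENNReal.ofReal_one, one_mul]
  have hCeq : ENNReal.ofReal (4 * 2 ^ s * C₀) =
      ENNReal.ofReal ((2:ℝ) ^ s) * ENNReal.ofReal C₀ * 4 := by
    rw [ENNReal.ofReal_mul (by positivity), ENNReal.ofReal_mul (by norm_num : (0:ℝ) ≤ 4),
      ENNReal.ofReal_ofNat]
    ring
  calc μ E ≤ ω E * 4 := hfour
    _ = ENNReal.ofReal ((2:ℝ) ^ s) * ν E * 4 := by rw [hωeq]
    _ ≤ ENNReal.ofReal ((2:ℝ) ^ s) * capPhiLevel d s (expGauge β) A E * 4 := by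
        exact mul_le_mul_left (mul_le_mul_right hνE_le _) _
    _ ≤ ENNReal.ofReal ((2:ℝ) ^ s) *
          (ENNReal.ofReal C₀ * capPhiLevel d s (expGauge β) 1 E) * 4 := by
        exact mul_le_mul_left (mul_le_mul_right (hcomp E hE) _) _
    _ = ENNReal.ofReal (4 * 2 ^ s * C₀) * capPhiLevel d s (expGauge β) 1 E := by
        rw [hCeq]; ring
end
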